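/- (Unified deterministic inequality for CSMD under a uniformly convex mirror map, heavy-tail setting.) Let p ∈ (1,2). Suppose Assumptions 2 and 3 hold with μ_f = μ_h = 0 and that ψ is (1, p/(p−1))-uniformly convex, i.e. D_ψ(x,y) ≥ ((p−1)/p)‖x−y‖^{p/(p−1)} for all x,y ∈ 𝒳. Define v_t := η_T/(Σ_{s=max(t,1)}^T η_s) for t ∈ {0}∪[T], and for fixed x ∈ 𝒳 define z^t := (v_0/v_t)·x + Σ_{s=1}^t ((v_s − v_{s−1})/v_t)·x^s. Then for every realization (with g^t ∈ ∂f(x^t) the conditional mean and ξ^t = ĝ^t − g^t): η_T v_T (F(x^{T+1}) − F(x)) ≤ v_0 D_ψ(x, x^1) + Σ_{t=1}^T η_t v_{t−1} ⟨ξ^t, z^{t−1} − x^t⟩ + Σ_{t=1}^T [ η_t^{p/(2−p)} v_t (2−p) 2^{(3p−4)/(2−p)} L^{p/(2−p)} + η_t^p v_t 4^{p−1}(M^p + ‖ξ^t‖_*^p) ] / p. -/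

import Mathlib

open MeasureTheory Real
open scoped RealInnerProductSpace BigOperators

/-- The dual norm of a general norm `nrm` on `ℝ^d`. -/
noncomputable def dualNorm {d : ℕ} (nrm : EuclideanSpace ℝ (Fin d) → ℝ) (g : EuclideanSpace ℝ (Fin d)) : ℝ :=
  sSup {r : ℝ | ∃ x, nrm x ≤ 1 ∧ r = ⟪g, x⟫}

/-- The subdifferential of `φ` at `y`, relative to the domain `X`. -/
def subgrad {d : ℕ} (X : Set (EuclideanSpace ℝ (Fin d))) (φ : EuclideanSpace ℝ (Fin d) → ℝ) (y : EuclideanSpace ℝ (Fin d)) : Set (EuclideanSpace ℝ (Fin d)) :=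
  {g | ∀ x ∈ X, φ y + ⟪g, x - y⟫ ≤ φ x}

/-- The Bregman divergence associated with `ψ`, whose gradient is `gψ`. -/
noncomputable def breg {d : ℕ} (ψ : EuclideanSpace ℝ (Fin d) → ℝ) (gψ : EuclideanSpace ℝ (Fin d) → EuclideanSpace ℝ (Fin d)) (x y : EuclideanSpace ℝ (Fin d)) : ℝ :=
  ψ x - ψ y - ⟪gψ y, x - y⟫

/-- The σ-algebra `σ(ĝ^1, …, ĝ^t)` generated by the first `t` stochastic gradients. -/
noncomputable def natFilt {Ω : Type*} {d : ℕ}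
    (ghat : ℕ → Ω → EuclideanSpace ℝ (Fin d)) (t : ℕ) : MeasurableSpace Ω :=
  ⨆ s ∈ Finset.Icc 1 t, MeasurableSpace.comap (ghat s) inferInstance

namespace CSMDaux


variable {d : ℕ} {nrm : EuclideanSpace ℝ (Fin d) → ℝ}

lemma nrm_zero' (hz : ∀ x, nrm x = 0 ↔ x = 0) : nrm 0 = 0 := (hz 0).mpr rfl

lemma nrm_neg (hsmul : ∀ (c : ℝ) (x : EuclideanSpace ℝ (Fin d)), nrm (c • x) = |c| * nrm x)
    (x : EuclideanSpace ℝ (Fin d)) : nrm (-x) = nrm x := by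
  have := hsmul (-1) x
  simpa using this

lemma nrm_sum_le (hz : ∀ x, nrm x = 0 ↔ x = 0)
    (htri : ∀ x y, nrm (x + y) ≤ nrm x + nrm y)
    {ι : Type*} (s : Finset ι) (f : ι → EuclideanSpace ℝ (Fin d)) :
    nrm (∑ i ∈ s, f i) ≤ ∑ i ∈ s, nrm (f i) := by
  classical
  induction s using Finset.cons_induction with
  | empty => simp [nrm_zero' hz]
  | cons a s ha ih =>
      rw [Finset.sum_cons, Finset.sum_cons]
      exact (htri _ _).trans (by linarith)

lemma nrm_le_norm (hz : ∀ x, nrm x = 0 ↔ x = 0) (hnn : ∀ x, 0 ≤ nrm x)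
    (hsmul : ∀ (c : ℝ) (x : EuclideanSpace ℝ (Fin d)), nrm (c • x) = |c| * nrm x)
    (htri : ∀ x y, nrm (x + y) ≤ nrm x + nrm y) :
    ∃ C : ℝ, 0 ≤ C ∧ ∀ x, nrm x ≤ C * ‖x‖ := by
  set b := EuclideanSpace.basisFun (Fin d) ℝ
  refine ⟨∑ i, nrm (b i), Finset.sum_nonneg fun i _ => ?_, fun x => ?_⟩
  · exact hnn _
  · have hx : x = ∑ i, b.repr x i • b i := (b.sum_repr x).symm
    calc nrm x = nrm (∑ i, b.repr x i • b i) := by rw [← hx]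
    _ ≤ ∑ i, nrm (b.repr x i • b i) := nrm_sum_le hz htri _ _
    _ ≤ ∑ i, ‖x‖ * nrm (b i) := by
        refine Finset.sum_le_sum fun i _ => ?_
        rw [hsmul]
        have h1 : |b.repr x i| ≤ ‖x‖ := by
          have h2 := abs_real_inner_le_norm (b i) x
          rw [← b.repr_apply_apply x i] at h2
          simpa [b.orthonormal.1 i] using h2
        exact mul_le_mul_of_nonneg_right h1 (hnn _)
    _ = (∑ i, nrm (b i)) * ‖x‖ := by rw [← Finset.mul_sum, mul_comm]

lemma norm_le_nrm (hz : ∀ x, nrm x = 0 ↔ x = 0) (hnn : ∀ x, 0 ≤ nrm x)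
    (hsmul : ∀ (c : ℝ) (x : EuclideanSpace ℝ (Fin d)), nrm (c • x) = |c| * nrm x)
    (htri : ∀ x y, nrm (x + y) ≤ nrm x + nrm y) :
    ∃ c : ℝ, 0 < c ∧ ∀ x, c * ‖x‖ ≤ nrm x := by
  obtain ⟨C, hC0, hC⟩ := nrm_le_norm hz hnn hsmul htri
  rcases subsingleton_or_nontrivial (EuclideanSpace ℝ (Fin d)) with hs | hs
  · exact ⟨1, one_pos, fun x => by
      rw [Subsingleton.elim x 0]; simp [nrm_zero' hz]⟩
  · -- nrm is continuous
    have hlip : ∀ a b : EuclideanSpace ℝ (Fin d), |nrm a - nrm b| ≤ C * ‖a - b‖ := by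
      intro a b
      rw [abs_le]
      constructor
      · have h3 : nrm b ≤ C * ‖a - b‖ + nrm a := by
          calc nrm b = nrm (b - a + a) := by congr 1; abel
          _ ≤ nrm (b - a) + nrm a := htri _ _
          _ ≤ C * ‖b - a‖ + nrm a := by linarith [hC (b - a)]
          _ = C * ‖a - b‖ + nrm a := by rw [norm_sub_rev]
        linarith
      · have h3 : nrm a ≤ C * ‖a - b‖ + nrm b := by
          calc nrm a = nrm (a - b + b) := by congr 1; abel
          _ ≤ nrm (a - b) + nrm b := htri _ _
          _ ≤ C * ‖a - b‖ + nrm b := by linarith [hC (a - b)]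
        linarith
    have hcont : Continuous nrm := by
      rw [Metric.continuous_iff]
      intro a ε hε
      refine ⟨ε / (C + 1), by positivity, fun b hb => ?_⟩
      have h1 := hlip b a
      have h2 : dist (nrm b) (nrm a) = |nrm b - nrm a| := Real.dist_eq _ _
      have h3 : dist b a = ‖b - a‖ := dist_eq_norm _ _
      rw [h2]
      calc |nrm b - nrm a| ≤ C * ‖b - a‖ := h1
      _ ≤ (C + 1) * ‖b - a‖ := by nlinarith [norm_nonneg (b - a)]
      _ < (C + 1) * (ε / (C + 1)) := by
          apply mul_lt_mul_of_pos_left _ (by linarith)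
          rw [← h3]; exact hb
      _ = ε := by field_simp
    have hsph : (Metric.sphere (0 : EuclideanSpace ℝ (Fin d)) 1).Nonempty :=
      NormedSpace.sphere_nonempty.mpr zero_le_one
    obtain ⟨m, hm, hmin⟩ := (isCompact_sphere (0 : EuclideanSpace ℝ (Fin d)) 1).exists_isMinOn
      hsph hcont.continuousOn
    have hm1 : ‖m‖ = 1 := mem_sphere_zero_iff_norm.mp hm
    have hmpos : 0 < nrm m := by
      rcases (lt_or_eq_of_le (hnn m)) with h | h
      · exact h
      · exfalso
        have : m = 0 := (hz m).mp h.symm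
        rw [this] at hm1; simp at hm1
    refine ⟨nrm m, hmpos, fun x => ?_⟩
    rcases eq_or_ne x 0 with rfl | hx
    · simp [nrm_zero' hz]
    · have hnx : 0 < ‖x‖ := norm_pos_iff.mpr hx
      have hmem : ‖x‖⁻¹ • x ∈ Metric.sphere (0 : EuclideanSpace ℝ (Fin d)) 1 := by
        rw [mem_sphere_zero_iff_norm, norm_smul]
        simp [abs_of_pos (inv_pos.mpr hnx), inv_mul_cancel₀ hnx.ne']
      have h1 : nrm m ≤ nrm (‖x‖⁻¹ • x) := hmin hmem
      rw [hsmul, abs_of_pos (inv_pos.mpr hnx)] at h1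
      calc nrm m * ‖x‖ ≤ (‖x‖⁻¹ * nrm x) * ‖x‖ := by nlinarith
      _ = nrm x := by field_simp

lemma dual_set_bddAbove (hz : ∀ x, nrm x = 0 ↔ x = 0) (hnn : ∀ x, 0 ≤ nrm x)
    (hsmul : ∀ (c : ℝ) (x : EuclideanSpace ℝ (Fin d)), nrm (c • x) = |c| * nrm x)
    (htri : ∀ x y, nrm (x + y) ≤ nrm x + nrm y) (g : EuclideanSpace ℝ (Fin d)) :
    BddAbove {r : ℝ | ∃ x, nrm x ≤ 1 ∧ r = ⟪g, x⟫} := by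
  obtain ⟨c, hc, hcle⟩ := norm_le_nrm hz hnn hsmul htri
  refine ⟨‖g‖ / c, fun r hr => ?_⟩
  obtain ⟨y, hy1, rfl⟩ := hr
  have h1 : ⟪g, y⟫ ≤ ‖g‖ * ‖y‖ := real_inner_le_norm g y
  have h2 : c * ‖y‖ ≤ nrm y := hcle y
  have h3 : c * ‖y‖ ≤ 1 := h2.trans hy1
  have h4 : ‖y‖ ≤ c⁻¹ := by
    have h5 := mul_le_mul_of_nonneg_left h3 (inv_nonneg.mpr hc.le)
    rwa [mul_one, inv_mul_cancel_left₀ hc.ne'] at h5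
  have h5 : ‖g‖ * ‖y‖ ≤ ‖g‖ * c⁻¹ := mul_le_mul_of_nonneg_left h4 (norm_nonneg g)
  rw [div_eq_mul_inv]
  linarith

lemma dualNorm_nonneg (hz : ∀ x, nrm x = 0 ↔ x = 0) (hnn : ∀ x, 0 ≤ nrm x)
    (hsmul : ∀ (c : ℝ) (x : EuclideanSpace ℝ (Fin d)), nrm (c • x) = |c| * nrm x)
    (htri : ∀ x y, nrm (x + y) ≤ nrm x + nrm y) (g : EuclideanSpace ℝ (Fin d)) :
    0 ≤ dualNorm nrm g := by
  apply le_csSup (dual_set_bddAbove hz hnn hsmul htri g)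
  exact ⟨0, by simp [nrm_zero' hz]⟩

lemma inner_le_dualNorm (hz : ∀ x, nrm x = 0 ↔ x = 0)
    (hnn : ∀ x, 0 ≤ nrm x)
    (hsmul : ∀ (c : ℝ) (x : EuclideanSpace ℝ (Fin d)), nrm (c • x) = |c| * nrm x)
    (htri : ∀ x y, nrm (x + y) ≤ nrm x + nrm y) (g u : EuclideanSpace ℝ (Fin d)) :
    ⟪g, u⟫ ≤ dualNorm nrm g * nrm u := by
  rcases (lt_or_eq_of_le (hnn u)) with hpos | hzero
  · have hmem : ⟪g, (nrm u)⁻¹ • u⟫ ∈ {r : ℝ | ∃ x, nrm x ≤ 1 ∧ r = ⟪g, x⟫} := by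
      refine ⟨(nrm u)⁻¹ • u, ?_, rfl⟩
      rw [hsmul, abs_of_pos (inv_pos.mpr hpos), inv_mul_cancel₀ hpos.ne']
    have h1 : ⟪g, (nrm u)⁻¹ • u⟫ ≤ dualNorm nrm g :=
      le_csSup (dual_set_bddAbove hz hnn hsmul htri g) hmem
    rw [real_inner_smul_right] at h1
    calc ⟪g, u⟫ = nrm u * ((nrm u)⁻¹ * ⟪g, u⟫) := by field_simp
    _ ≤ nrm u * dualNorm nrm g := mul_le_mul_of_nonneg_left h1 hpos.le
    _ = dualNorm nrm g * nrm u := mul_comm _ _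
  · have hu : u = 0 := (hz u).mp hzero.symm
    simp [hu, nrm_zero' hz]




lemma conj_exp {p : ℝ} (hp1 : 1 < p) : p.HolderConjugate (p / (p - 1)) :=
  (Real.holderConjugate_iff_eq_conjExponent hp1).mpr rfl

/-- Young part for the linear term. -/
lemma young_lin {p : ℝ} (hp1 : 1 < p) {b r : ℝ} (hb : 0 ≤ b) (hr : 0 ≤ r) :
    b * r ≤ (2:ℝ) ^ (p - 1) * b ^ p / p + (p - 1) / p / 2 * r ^ (p / (p - 1)) := by
  have hp0 : (0:ℝ) < p := by linarith
  have hp1' : p - 1 ≠ 0 := by intro h; linarith [sub_eq_zero.mp h]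
  set q : ℝ := p / (p - 1) with hq
  have hpq : p.HolderConjugate q := conj_exp hp1
  have hq0 : (0:ℝ) < q := hpq.symm.pos
  have h2 : (0:ℝ) ≤ (2:ℝ) ^ (1 / q) := (rpow_pos_of_pos two_pos _).le
  have h2' : (0:ℝ) ≤ (2:ℝ) ^ (-(1 / q)) := (rpow_pos_of_pos two_pos _).le
  have key := Real.young_inequality_of_nonneg (mul_nonneg hb h2) (mul_nonneg hr h2') hpq
  have e1 : b * (2:ℝ) ^ (1 / q) * (r * (2:ℝ) ^ (-(1 / q))) = b * r := by
    rw [mul_mul_mul_comm, ← rpow_add two_pos]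
    simp
  have e2 : (b * (2:ℝ) ^ (1 / q)) ^ p = b ^ p * 2 ^ (p - 1) := by
    rw [mul_rpow hb h2, ← Real.rpow_mul (by norm_num : (0:ℝ) ≤ 2)]
    congr 2
    rw [hq]
    field_simp
  have e3 : (r * (2:ℝ) ^ (-(1 / q))) ^ q = r ^ q / 2 := by
    rw [mul_rpow hr h2', ← Real.rpow_mul (by norm_num : (0:ℝ) ≤ 2)]
    have h4 : -(1 / q) * q = -1 := by field_simp
    rw [h4, rpow_neg_one]
    ring
  rw [e1, e2, e3] at key
  have hqinv : (p - 1) / p / 2 = 1 / (2 * q) := by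
    rw [hq]; field_simp
  calc b * r ≤ b ^ p * 2 ^ (p - 1) / p + r ^ q / 2 / q := key
  _ = (2:ℝ) ^ (p - 1) * b ^ p / p + (p - 1) / p / 2 * r ^ q := by
    rw [hqinv]; field_simp

/-- Young part for the quadratic term. -/
lemma young_quad {p : ℝ} (hp1 : 1 < p) (hp2 : p < 2) {A r : ℝ} (hA : 0 ≤ A) (hr : 0 ≤ r) :
    A / 2 * r ^ (2:ℕ) ≤
      (2 - p) / p * (2:ℝ) ^ ((3 * p - 4) / (2 - p)) * A ^ (p / (2 - p))
        + (p - 1) / p / 2 * r ^ (p / (p - 1)) := by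
  have hp0 : (0:ℝ) < p := by linarith
  have hp1' : (0:ℝ) < p - 1 := by linarith
  have hp2' : (0:ℝ) < 2 - p := by linarith
  set q : ℝ := p / (p - 1) with hq
  have hq0 : (0:ℝ) < q := by positivity
  have hq2 : 2 < q := by
    rw [hq, lt_div_iff₀ hp1']; linarith
  set s : ℝ := q / 2 with hs
  have hs1 : 1 < s := by rw [hs]; linarith
  have hss : s.HolderConjugate (s / (s - 1)) := conj_exp hs1
  have hsconj : s / (s - 1) = q / (q - 2) := by
    rw [hs]; field_simp
  have hsconj' : q / (q - 2) = p / (2 - p) := by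
    rw [div_eq_div_iff (by linarith : q - 2 ≠ 0) (by linarith : (2:ℝ) - p ≠ 0), hq]
    field_simp
    try ring
    try exact Or.inl trivial
  have ht0 : (0:ℝ) < (2:ℝ) ^ (-(4 / q)) := rpow_pos_of_pos two_pos _
  have ha0 : 0 ≤ r ^ ((2:ℕ):ℝ) * (2:ℝ) ^ (-(4 / q)) := mul_nonneg (rpow_nonneg hr _) ht0.le
  have hb0 : 0 ≤ A / (2 * (2:ℝ) ^ (-(4 / q))) := by positivity
  have key := Real.young_inequality_of_nonneg ha0 hb0 hss
  have e1 : r ^ ((2:ℕ):ℝ) * (2:ℝ) ^ (-(4 / q)) * (A / (2 * (2:ℝ) ^ (-(4 / q))))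
      = A / 2 * r ^ (2:ℕ) := by
    rw [Real.rpow_natCast]
    field_simp
  have h14 : (2:ℝ) ^ (-2:ℝ) = 1 / 4 := by
    rw [show (-2:ℝ) = ((-2:ℤ):ℝ) by norm_num, rpow_intCast]
    norm_num
  have e2 : (r ^ ((2:ℕ):ℝ) * (2:ℝ) ^ (-(4 / q))) ^ s = r ^ q * (1 / 4) := by
    rw [mul_rpow (rpow_nonneg hr _) ht0.le, ← Real.rpow_mul hr,
      ← Real.rpow_mul (by norm_num : (0:ℝ) ≤ 2)]
    have h1 : ((2:ℕ):ℝ) * s = q := by rw [hs]; push_cast; ring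
    have h2 : -(4 / q) * s = -2 := by rw [hs]; field_simp; ring
    rw [h1, h2, h14]
  have e3 : (A / (2 * (2:ℝ) ^ (-(4 / q)))) ^ (s / (s - 1))
      = A ^ (p / (2 - p)) * (2:ℝ) ^ ((3 * p - 4) / (2 - p)) := by
    have hd : A / (2 * (2:ℝ) ^ (-(4 / q))) = A * (2:ℝ) ^ (4 / q - 1) := by
      have h5 : (2:ℝ) * (2:ℝ) ^ (-(4 / q)) = (2:ℝ) ^ (1 - 4 / q) := by
        rw [show (1 - 4 / q : ℝ) = 1 + -(4 / q) by ring, rpow_add two_pos, rpow_one]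
      rw [h5, show (4 / q - 1 : ℝ) = -(1 - 4 / q) by ring,
        rpow_neg (by norm_num : (0:ℝ) ≤ 2), div_eq_mul_inv A]
    rw [hd, hsconj, hsconj', mul_rpow hA (rpow_pos_of_pos two_pos _).le,
      ← Real.rpow_mul (by norm_num : (0:ℝ) ≤ 2)]
    congr 2
    rw [hq]
    field_simp
    ring
  rw [e1, e2, e3] at key
  have hc1 : r ^ q * (1 / 4) / s = (p - 1) / p / 2 * r ^ q := by
    rw [hs, hq]; field_simp; ring
  have hc2 : A ^ (p / (2 - p)) * (2:ℝ) ^ ((3 * p - 4) / (2 - p)) / (s / (s - 1))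
      = (2 - p) / p * (2:ℝ) ^ ((3 * p - 4) / (2 - p)) * A ^ (p / (2 - p)) := by
    rw [hsconj, hsconj', div_div_eq_mul_div]
    ring
  rw [hc1, hc2] at key
  linarith

/-- `(M+N)^p ≤ 2^(p-1) (M^p + N^p)` for real exponents `p ≥ 1`. -/
lemma add_rpow_le {p M N : ℝ} (hp : 1 ≤ p) (hM : 0 ≤ M) (hN : 0 ≤ N) :
    (M + N) ^ p ≤ (2:ℝ) ^ (p - 1) * (M ^ p + N ^ p) := by
  have key := NNReal.rpow_add_le_mul_rpow_add_rpow M.toNNReal N.toNNReal hp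
  have key2 := NNReal.coe_le_coe.mpr key
  push_cast at key2
  rwa [Real.coe_toNNReal M hM, Real.coe_toNNReal N hN] at key2

/-- Combined Young bound for the per-step cost. -/
lemma young_total {p : ℝ} (hp1 : 1 < p) (hp2 : p < 2) {e L a r : ℝ}
    (he : 0 < e) (hL : 0 ≤ L) (ha : 0 ≤ a) (hr : 0 ≤ r) :
    e * (L / 2 * r ^ (2:ℕ) + a * r) - (p - 1) / p * r ^ (p / (p - 1)) ≤
      (e ^ (p / (2 - p)) * (2 - p) * (2:ℝ) ^ ((3 * p - 4) / (2 - p)) * L ^ (p / (2 - p))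
        + e ^ p * (2:ℝ) ^ (p - 1) * a ^ p) / p := by
  have h1 := young_quad hp1 hp2 (mul_nonneg he.le hL) hr
  have h2 := young_lin hp1 (mul_nonneg he.le ha) hr
  have e1 : (e * L) ^ (p / (2 - p)) = e ^ (p / (2 - p)) * L ^ (p / (2 - p)) :=
    mul_rpow he.le hL
  have e2 : (e * a) ^ p = e ^ p * a ^ p := mul_rpow he.le ha
  rw [e1] at h1
  rw [e2] at h2
  have hp0 : (0:ℝ) < p := by linarith
  have hq : 0 ≤ r ^ (p / (p - 1)) := rpow_nonneg hr _
  -- combine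
  have hre : (e ^ (p / (2 - p)) * (2 - p) * (2:ℝ) ^ ((3 * p - 4) / (2 - p)) * L ^ (p / (2 - p))
        + e ^ p * (2:ℝ) ^ (p - 1) * a ^ p) / p
      = (2 - p) / p * (2:ℝ) ^ ((3 * p - 4) / (2 - p)) * (e ^ (p / (2 - p)) * L ^ (p / (2 - p)))
        + (2:ℝ) ^ (p - 1) * (e ^ p * a ^ p) / p
        + ((p - 1) / p / 2 * r ^ (p / (p - 1)) + (p - 1) / p / 2 * r ^ (p / (p - 1)))
        - (p - 1) / p * r ^ (p / (p - 1)) := by ring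
  rw [hre]
  have hgl : e * (L / 2 * r ^ (2:ℕ) + a * r) = e * L / 2 * r ^ (2:ℕ) + e * a * r := by ring
  rw [hgl]
  linarith [h1, h2]




variable {d : ℕ} {ψ : EuclideanSpace ℝ (Fin d) → ℝ}
  {gψ : EuclideanSpace ℝ (Fin d) → EuclideanSpace ℝ (Fin d)}

lemma breg_self (a : EuclideanSpace ℝ (Fin d)) : breg ψ gψ a a = 0 := by
  simp [breg]

lemma breg_three (u y w : EuclideanSpace ℝ (Fin d)) :
    ⟪gψ w - gψ y, u - w⟫ = breg ψ gψ u y - breg ψ gψ u w - breg ψ gψ w y := by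
  simp only [breg, inner_sub_left, inner_sub_right]
  ring

lemma breg_combo {X : Set (EuclideanSpace ℝ (Fin d))} (hXcv : Convex ℝ X)
    (huc0 : ∀ a ∈ X, ∀ b ∈ X, 0 ≤ breg ψ gψ a b)
    {a b w : EuclideanSpace ℝ (Fin d)} (ha : a ∈ X) (hb : b ∈ X) (hw : w ∈ X)
    {α β : ℝ} (hα : 0 ≤ α) (hβ : 0 ≤ β) (hαβ : α + β = 1) :
    breg ψ gψ (α • a + β • b) w ≤ α * breg ψ gψ a w + β * breg ψ gψ b w := by
  set c := α • a + β • b with hcdef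
  have hc : c ∈ X := hXcv ha hb hα hβ hαβ
  have h1 : 0 ≤ α * breg ψ gψ a c := mul_nonneg hα (huc0 a ha c hc)
  have h2 : 0 ≤ β * breg ψ gψ b c := mul_nonneg hβ (huc0 b hb c hc)
  have hz : α • (a - c) + β • (b - c) = 0 := by
    calc α • (a - c) + β • (b - c) = (α • a + β • b) - (α • c + β • c) := by
          rw [smul_sub, smul_sub]; abel
    _ = c - c := by rw [← add_smul, hαβ, one_smul, hcdef]
    _ = 0 := sub_self c
  have hinner : α * ⟪gψ c, a - c⟫ + β * ⟪gψ c, b - c⟫ = 0 := by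
    rw [← real_inner_smul_right, ← real_inner_smul_right, ← inner_add_right, hz,
      inner_zero_right]
  have hlin : (⟪gψ w, c - w⟫:ℝ) = α * ⟪gψ w, a - w⟫ + β * ⟪gψ w, b - w⟫ := by
    rw [← real_inner_smul_right, ← real_inner_smul_right, ← inner_add_right]
    congr 1
    calc c - w = (α • a + β • b) - (α + β) • w := by rw [hαβ, one_smul, hcdef]
    _ = α • (a - w) + β • (b - w) := by rw [smul_sub, smul_sub, add_smul]; abel
  have h3 : α * ψ c + β * ψ c = ψ c := by rw [← add_mul, hαβ, one_mul]
  have h4 : α * ψ w + β * ψ w = ψ w := by rw [← add_mul, hαβ, one_mul]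
  simp only [breg] at h1 h2 ⊢
  nlinarith [h1, h2, hinner, hlin, h3, h4]

lemma mirror_step {X : Set (EuclideanSpace ℝ (Fin d))} (hXcv : Convex ℝ X)
    {h : EuclideanSpace ℝ (Fin d) → ℝ} (hh : ConvexOn ℝ Set.univ h)
    (hψ : ∀ y, HasGradientAt ψ (gψ y) y)
    {g y xp : EuclideanSpace ℝ (Fin d)} {e : ℝ} (he : 0 < e)
    (hxp : xp ∈ X)
    (hmin : IsMinOn (fun u => h u + ⟪g, u - y⟫ + breg ψ gψ u y / e) X xp)
    {u : EuclideanSpace ℝ (Fin d)} (hu : u ∈ X) :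
    e * (h xp - h u) ≤ e * ⟪g, u - xp⟫ + breg ψ gψ u y - breg ψ gψ u xp - breg ψ gψ xp y := by
  set K : ℝ := e * (h u - h xp + ⟪g, u - xp⟫) - ⟪gψ y, u - xp⟫ with hK
  have claim1 : ∀ l : ℝ, l ∈ Set.Ioc (0:ℝ) 1 →
      (ψ xp - ψ (xp + l • (u - xp))) / l ≤ K := by
    intro l hl
    obtain ⟨hl0, hl1⟩ := hl
    set w := xp + l • (u - xp) with hwdef
    have hw : w = (1 - l) • xp + l • u := by
      rw [hwdef, smul_sub, sub_smul, one_smul]; abel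
    have hwX : w ∈ X := by
      rw [hw]; exact hXcv hxp hu (by linarith) hl0.le (by ring)
    have h1 : h xp + ⟪g, xp - y⟫ + breg ψ gψ xp y / e
        ≤ h w + ⟪g, w - y⟫ + breg ψ gψ w y / e := isMinOn_iff.mp hmin w hwX
    have hhw : h w ≤ (1 - l) * h xp + l * h u := by
      rw [hw]
      exact hh.2 (Set.mem_univ _) (Set.mem_univ _) (by linarith) hl0.le (by ring)
    have hi1 : (⟪g, w - y⟫:ℝ) = ⟪g, xp - y⟫ + l * ⟪g, u - xp⟫ := by
      have hd : w - y = (xp - y) + l • (u - xp) := by rw [hwdef]; abel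
      rw [hd, inner_add_right, real_inner_smul_right]
    have hi2 : (⟪gψ y, w - y⟫:ℝ) = ⟪gψ y, xp - y⟫ + l * ⟪gψ y, u - xp⟫ := by
      have hd : w - y = (xp - y) + l • (u - xp) := by rw [hwdef]; abel
      rw [hd, inner_add_right, real_inner_smul_right]
    have hc : ∀ xx : ℝ, e * (xx / e) = xx := fun xx => by field_simp
    have h1'' : e * (h xp + ⟪g, xp - y⟫) + (ψ xp - ψ y - ⟪gψ y, xp - y⟫)
        ≤ e * (h w + ⟪g, w - y⟫) + (ψ w - ψ y - ⟪gψ y, w - y⟫) := by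
      have h1' := mul_le_mul_of_nonneg_left h1 he.le
      simp only [breg] at h1'
      rw [mul_add, mul_add e (h w + ⟪g, w - y⟫), hc, hc] at h1'
      linarith [h1']
    have hi1' : e * ⟪g, w - y⟫ = e * ⟪g, xp - y⟫ + e * (l * ⟪g, u - xp⟫) := by
      rw [hi1]; ring
    have hhw' := mul_le_mul_of_nonneg_left hhw he.le
    have h2 : ψ xp - ψ w ≤ l * K := by
      rw [hK]
      nlinarith [h1'', hhw', hi1', hi2]
    rw [div_le_iff₀ hl0]
    linarith [h2]
  have hline : HasDerivAt (fun l : ℝ => xp + l • (u - xp)) (u - xp) 0 := by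
    have h1 : HasDerivAt (fun l : ℝ => l • (u - xp)) ((1:ℝ) • (u - xp)) 0 :=
      (hasDerivAt_id (0:ℝ)).smul_const (u - xp)
    rw [one_smul] at h1
    simpa using h1.const_add xp
  have hx0 : xp + (0:ℝ) • (u - xp) = xp := by simp
  have hcomp : HasDerivAt (fun l : ℝ => ψ (xp + l • (u - xp))) ⟪gψ xp, u - xp⟫ 0 := by
    have hf : HasFDerivAt ψ (InnerProductSpace.toDual ℝ _ (gψ xp)) (xp + (0:ℝ) • (u - xp)) := by
      rw [hx0]; exact (hψ xp).hasFDerivAt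
    have h2 := hf.comp_hasDerivAt (0:ℝ) hline
    simp only [InnerProductSpace.toDual_apply_apply] at h2
    exact h2
  have hslope : Filter.Tendsto (fun l : ℝ => (ψ (xp + l • (u - xp)) - ψ xp) / l)
      (nhdsWithin 0 (Set.Ioi 0)) (nhds ⟪gψ xp, u - xp⟫) := by
    have h3 := hasDerivAt_iff_tendsto_slope.mp hcomp
    have h4 : Filter.Tendsto (slope (fun l : ℝ => ψ (xp + l • (u - xp))) 0)
        (nhdsWithin 0 (Set.Ioi 0)) (nhds ⟪gψ xp, u - xp⟫) :=
      h3.mono_left (nhdsWithin_mono 0 (fun x hx => ne_of_gt hx))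
    refine h4.congr (fun l => ?_)
    rw [slope_def_field, hx0, sub_zero]
  have hge : -K ≤ ⟪gψ xp, u - xp⟫ := by
    refine ge_of_tendsto hslope ?_
    filter_upwards [Ioc_mem_nhdsGT_of_mem (Set.mem_Ico.mpr ⟨le_refl (0:ℝ), zero_lt_one⟩)]
      with l hl
    have hcl := claim1 l hl
    have hl0 : 0 < l := hl.1
    rw [div_le_iff₀ hl0] at hcl
    rw [le_div_iff₀ hl0]
    linarith [hcl]
  have h3p := breg_three (ψ := ψ) (gψ := gψ) u y xp
  have hsub : (⟪gψ xp - gψ y, u - xp⟫:ℝ) = ⟪gψ xp, u - xp⟫ - ⟪gψ y, u - xp⟫ :=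
    inner_sub_left _ _ _
  rw [hK] at hge
  linarith [hge, h3p, hsub]



lemma per_step {d : ℕ} {p : ℝ} (hp1 : 1 < p) (hp2 : p < 2)
    {X : Set (EuclideanSpace ℝ (Fin d))} (hXcv : Convex ℝ X)
    {nrm : EuclideanSpace ℝ (Fin d) → ℝ}
    (hnn : ∀ x, 0 ≤ nrm x) (hz0 : ∀ x, nrm x = 0 ↔ x = 0)
    (hsmul : ∀ (c : ℝ) (x : EuclideanSpace ℝ (Fin d)), nrm (c • x) = |c| * nrm x)
    (htri : ∀ x y, nrm (x + y) ≤ nrm x + nrm y)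
    {f h : EuclideanSpace ℝ (Fin d) → ℝ} (hh : ConvexOn ℝ Set.univ h)
    {ψ : EuclideanSpace ℝ (Fin d) → ℝ}
    {gψ : EuclideanSpace ℝ (Fin d) → EuclideanSpace ℝ (Fin d)}
    (hψ : ∀ y, HasGradientAt ψ (gψ y) y)
    (huc : ∀ a ∈ X, ∀ b ∈ X, (p - 1) / p * nrm (a - b) ^ (p / (p - 1)) ≤ breg ψ gψ a b)
    {L M : ℝ} (hL : 0 ≤ L) (hM : 0 ≤ M)
    {y xp : EuclideanSpace ℝ (Fin d)} (hy : y ∈ X) (hxp : xp ∈ X)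
    {gh gs : EuclideanSpace ℝ (Fin d)}
    (hgs : gs ∈ subgrad X f y)
    (hsm : f xp - f y - ⟪gs, xp - y⟫ ≤ L / 2 * nrm (xp - y) ^ 2 + M * nrm (xp - y))
    {e : ℝ} (he : 0 < e)
    (hmin : IsMinOn (fun u => h u + ⟪gh, u - y⟫ + breg ψ gψ u y / e) X xp)
    {u : EuclideanSpace ℝ (Fin d)} (hu : u ∈ X) :
    e * ((f xp + h xp) - (f u + h u)) ≤ e * ⟪gh - gs, u - y⟫
      + breg ψ gψ u y - breg ψ gψ u xp
      + (e ^ (p / (2 - p)) * (2 - p) * (2:ℝ) ^ ((3 * p - 4) / (2 - p)) * L ^ (p / (2 - p))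
        + e ^ p * (4:ℝ) ^ (p - 1) * (M ^ p + dualNorm nrm (gh - gs) ^ p)) / p := by
  have hmir := mirror_step hXcv hh hψ he hxp hmin hu
  have hsub := hgs u hu
  set r := nrm (xp - y) with hrdef
  set N := dualNorm nrm (gh - gs) with hNdef
  have hN : 0 ≤ N := dualNorm_nonneg hz0 hnn hsmul htri _
  have hr : 0 ≤ r := hnn _
  have hid : e * ⟪gh, u - xp⟫
      = e * ⟪gh - gs, u - y⟫ + e * ⟪gh - gs, y - xp⟫ + e * ⟪gs, u - xp⟫ := by
    simp only [inner_sub_left, inner_sub_right]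
    ring
  have hdual0 : (⟪gh - gs, y - xp⟫:ℝ) ≤ N * r := by
    have h1 := inner_le_dualNorm hz0 hnn hsmul htri (gh - gs) (y - xp)
    have h2 : nrm (y - xp) = r := by
      rw [hrdef, show y - xp = -(xp - y) by abel, nrm_neg hsmul]
    rw [h2] at h1
    exact h1
  have hdual : e * ⟪gh - gs, y - xp⟫ ≤ e * (N * r) :=
    mul_le_mul_of_nonneg_left hdual0 he.le
  have huc' : (p - 1) / p * r ^ (p / (p - 1)) ≤ breg ψ gψ xp y := huc xp hxp y hy
  have hyoung := young_total hp1 hp2 (e := e) (L := L) (a := M + N) (r := r)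
    he hL (add_nonneg hM hN) hr
  have hMN : (M + N) ^ p ≤ (2:ℝ) ^ (p - 1) * (M ^ p + N ^ p) :=
    add_rpow_le hp1.le hM hN
  have h4 : (4:ℝ) ^ (p - 1) = (2:ℝ) ^ (p - 1) * (2:ℝ) ^ (p - 1) := by
    rw [show (4:ℝ) = 2 * 2 by norm_num, mul_rpow (by norm_num) (by norm_num)]
  have hep : 0 ≤ e ^ p := rpow_nonneg he.le p
  have h2p : 0 ≤ (2:ℝ) ^ (p - 1) := (rpow_pos_of_pos two_pos _).le
  have hp0 : (0:ℝ) < p := by linarith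
  have h9 : e ^ p * (2:ℝ) ^ (p - 1) * (M + N) ^ p / p
      ≤ e ^ p * (4:ℝ) ^ (p - 1) * (M ^ p + N ^ p) / p := by
    rw [h4]
    have := mul_le_mul_of_nonneg_left hMN (mul_nonneg hep h2p)
    calc e ^ p * (2:ℝ) ^ (p - 1) * (M + N) ^ p / p
        = e ^ p * (2:ℝ) ^ (p - 1) * (M + N) ^ p * p⁻¹ := by ring
    _ ≤ e ^ p * (2:ℝ) ^ (p - 1) * ((2:ℝ) ^ (p - 1) * (M ^ p + N ^ p)) * p⁻¹ := by
        apply mul_le_mul_of_nonneg_right _ (inv_nonneg.mpr hp0.le)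
        calc e ^ p * (2:ℝ) ^ (p - 1) * (M + N) ^ p
            = e ^ p * (2:ℝ) ^ (p - 1) * (M + N) ^ p := rfl
        _ ≤ e ^ p * (2:ℝ) ^ (p - 1) * ((2:ℝ) ^ (p - 1) * (M ^ p + N ^ p)) := this
    _ = e ^ p * ((2:ℝ) ^ (p - 1) * (2:ℝ) ^ (p - 1)) * (M ^ p + N ^ p) / p := by ring
  have hsm' := mul_le_mul_of_nonneg_left hsm he.le
  have hsub' := mul_le_mul_of_nonneg_left hsub he.le
  have h6 : e * ⟪gs, u - xp⟫ = e * ⟪gs, u - y⟫ - e * ⟪gs, xp - y⟫ := by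
    have h7 : (⟪gs, u - xp⟫:ℝ) = ⟪gs, u - y⟫ - ⟪gs, xp - y⟫ := by
      rw [show u - xp = (u - y) - (xp - y) by abel, inner_sub_right]
    rw [h7]; ring
  have step1 : e * ((f xp + h xp) - (f u + h u))
      ≤ e * ⟪gh - gs, u - y⟫ + e * ⟪gh - gs, y - xp⟫
        + e * (L / 2 * r ^ 2 + M * r) + breg ψ gψ u y - breg ψ gψ u xp - breg ψ gψ xp y := by
    linarith [hmir, hsm', hsub', hid, h6]
  have step2 : e * ((f xp + h xp) - (f u + h u))
      ≤ e * ⟪gh - gs, u - y⟫ + breg ψ gψ u y - breg ψ gψ u xp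
        + (e * (L / 2 * r ^ 2 + (M + N) * r) - (p - 1) / p * r ^ (p / (p - 1))) := by
    have hx : e * (L / 2 * r ^ 2 + M * r) + e * (N * r)
        = e * (L / 2 * r ^ 2 + (M + N) * r) := by ring
    linarith [step1, hdual, huc', hx]
  have step3 : e * ((f xp + h xp) - (f u + h u))
      ≤ e * ⟪gh - gs, u - y⟫ + breg ψ gψ u y - breg ψ gψ u xp
        + (e ^ (p / (2 - p)) * (2 - p) * (2:ℝ) ^ ((3 * p - 4) / (2 - p)) * L ^ (p / (2 - p))
          + e ^ p * (2:ℝ) ^ (p - 1) * (M + N) ^ p) / p := by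
    linarith [step2, hyoung]
  have step4 : (e ^ (p / (2 - p)) * (2 - p) * (2:ℝ) ^ ((3 * p - 4) / (2 - p)) * L ^ (p / (2 - p))
          + e ^ p * (2:ℝ) ^ (p - 1) * (M + N) ^ p) / p
      ≤ (e ^ (p / (2 - p)) * (2 - p) * (2:ℝ) ^ ((3 * p - 4) / (2 - p)) * L ^ (p / (2 - p))
          + e ^ p * (4:ℝ) ^ (p - 1) * (M ^ p + N ^ p)) / p := by
    have hd1 : (e ^ (p / (2 - p)) * (2 - p) * (2:ℝ) ^ ((3 * p - 4) / (2 - p)) * L ^ (p / (2 - p))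
          + e ^ p * (2:ℝ) ^ (p - 1) * (M + N) ^ p) / p
        = e ^ (p / (2 - p)) * (2 - p) * (2:ℝ) ^ ((3 * p - 4) / (2 - p)) * L ^ (p / (2 - p)) / p
          + e ^ p * (2:ℝ) ^ (p - 1) * (M + N) ^ p / p := by ring
    have hd2 : (e ^ (p / (2 - p)) * (2 - p) * (2:ℝ) ^ ((3 * p - 4) / (2 - p)) * L ^ (p / (2 - p))
          + e ^ p * (4:ℝ) ^ (p - 1) * (M ^ p + N ^ p)) / p
        = e ^ (p / (2 - p)) * (2 - p) * (2:ℝ) ^ ((3 * p - 4) / (2 - p)) * L ^ (p / (2 - p)) / p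
          + e ^ p * (4:ℝ) ^ (p - 1) * (M ^ p + N ^ p) / p := by ring
    rw [hd1, hd2]
    linarith [h9]
  linarith [step3, step4]

lemma sum_Icc_succ_top' {M : Type*} [AddCommMonoid M] {a b : ℕ} (hab : a ≤ b + 1) (f : ℕ → M) :
    (∑ k ∈ Finset.Icc a (b + 1), f k) = (∑ k ∈ Finset.Icc a b, f k) + f (b + 1) := by
  rw [← Finset.Ico_add_one_right_eq_Icc, Finset.sum_Ico_succ_top hab, Finset.Ico_add_one_right_eq_Icc]

lemma sum_Icc_succ_bot' {M : Type*} [AddCommMonoid M] {a b : ℕ} (hab : a ≤ b) (f : ℕ → M) :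
    (∑ k ∈ Finset.Icc a b, f k) = f a + ∑ k ∈ Finset.Icc (a + 1) b, f k := by
  rw [Finset.Icc_eq_cons_Ioc hab, Finset.sum_cons, ← Finset.Icc_add_one_left_eq_Ioc]

end CSMDaux

/-- Lemma 6 (unified deterministic inequality for CSMD under a `(1, p/(p−1))`-uniformly
convex mirror map, heavy-tail setting). -/
theorem csmd_unified_deterministic_heavy
    (p : ℝ) (hp1 : 1 < p) (hp2 : p < 2)
    {d : ℕ}
    (X : Set (EuclideanSpace ℝ (Fin d))) (hXne : X.Nonempty) (hXcl : IsClosed X) (hXcv : Convex ℝ X)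
    (nrm : EuclideanSpace ℝ (Fin d) → ℝ)
    (hnrm_nonneg : ∀ x, 0 ≤ nrm x)
    (hnrm_zero : ∀ x, nrm x = 0 ↔ x = 0)
    (hnrm_smul : ∀ (c : ℝ) (x : EuclideanSpace ℝ (Fin d)), nrm (c • x) = |c| * nrm x)
    (hnrm_tri : ∀ x y, nrm (x + y) ≤ nrm x + nrm y)
    (f h : EuclideanSpace ℝ (Fin d) → ℝ)
    (hf_cv : ConvexOn ℝ Set.univ f) (hh_cv : ConvexOn ℝ Set.univ h)
    (ψ : EuclideanSpace ℝ (Fin d) → ℝ) (gψ : EuclideanSpace ℝ (Fin d) → EuclideanSpace ℝ (Fin d))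
    (hψ_diff : ∀ y, HasGradientAt ψ (gψ y) y)
    (hψ_uc : ∀ x ∈ X, ∀ y ∈ X, (p - 1) / p * nrm (x - y) ^ (p / (p - 1)) ≤ breg ψ gψ x y)
    (L M : ℝ) (hL : 0 ≤ L) (hM : 0 ≤ M)
    (hsmooth : ∀ x ∈ X, ∀ y ∈ X, ∀ g ∈ subgrad X f y,
      f x - f y - ⟪g, x - y⟫ ≤ L / 2 * nrm (x - y) ^ 2 + M * nrm (x - y))
    (T : ℕ) (hT : 2 ≤ T)
    (η : ℕ → ℝ) (hη_pos : ∀ t ∈ Finset.Icc 1 T, 0 < η t)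
    (ghat gsub : ℕ → EuclideanSpace ℝ (Fin d))
    (x : ℕ → EuclideanSpace ℝ (Fin d)) (hx1 : x 1 ∈ X)
    (hgsub : ∀ t ∈ Finset.Icc 1 T, gsub t ∈ subgrad X f (x t))
    (hupdate : ∀ t ∈ Finset.Icc 1 T, x (t + 1) ∈ X ∧
      IsMinOn (fun u => h u + ⟪ghat t, u - x t⟫ + breg ψ gψ u (x t) / η t) X (x (t + 1)))
    (v : ℕ → ℝ)
    (hv : ∀ t ≤ T, v t = η T / ∑ s ∈ Finset.Icc (max t 1) T, η s)
    (xpt : EuclideanSpace ℝ (Fin d)) (hxpt : xpt ∈ X)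
    (z : ℕ → EuclideanSpace ℝ (Fin d))
    (hz : ∀ t ≤ T, z t =
      (v 0 / v t) • xpt + ∑ s ∈ Finset.Icc 1 t, ((v s - v (s - 1)) / v t) • x s) :
    η T * v T * ((f (x (T + 1)) + h (x (T + 1))) - (f xpt + h xpt)) ≤
      v 0 * breg ψ gψ xpt (x 1)
      + ∑ t ∈ Finset.Icc 1 T, η t * v (t - 1) * ⟪ghat t - gsub t, z (t - 1) - x t⟫
      + ∑ t ∈ Finset.Icc 1 T,
          (η t ^ (p / (2 - p)) * v t * (2 - p) * (2 : ℝ) ^ ((3 * p - 4) / (2 - p)) *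
              L ^ (p / (2 - p))
            + η t ^ p * v t * (4 : ℝ) ^ (p - 1) *
                (M ^ p + dualNorm nrm (ghat t - gsub t) ^ p)) / p := by
  classical
  have hp0 : (0:ℝ) < p := by linarith
  have hT1 : 1 ≤ T := le_trans one_le_two hT
  -- notation shortcuts
  have hxmem : ∀ t, 1 ≤ t → t ≤ T + 1 → x t ∈ X := by
    intro t ht1 ht2
    cases t with
    | zero => omega
    | succ s =>
      rcases Nat.eq_zero_or_pos s with rfl | hs
      · exact hx1
      · exact (hupdate s (Finset.mem_Icc.mpr ⟨hs, by omega⟩)).1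
  have hηpos' : ∀ t, 1 ≤ t → t ≤ T → 0 < η t := fun t h1 h2 =>
    hη_pos t (Finset.mem_Icc.mpr ⟨h1, h2⟩)
  have hS_pos : ∀ t, 1 ≤ t → t ≤ T → 0 < ∑ s ∈ Finset.Icc t T, η s := by
    intro t ht1 htT
    apply Finset.sum_pos
    · intro i hi
      rw [Finset.mem_Icc] at hi
      exact hηpos' i (le_trans ht1 hi.1) hi.2
    · exact ⟨t, Finset.mem_Icc.mpr ⟨le_refl t, htT⟩⟩
  have hηT : 0 < η T := hηpos' T hT1 le_rfl
  have hvpos : ∀ t, t ≤ T → 0 < v t := by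
    intro t htT
    rw [hv t htT]
    exact div_pos hηT (hS_pos (max t 1) (le_max_right _ _) (max_le htT hT1))
  have hv01 : v 0 = v 1 := by
    rw [hv 0 (Nat.zero_le T), hv 1 hT1]
    norm_num
  have hvmono : ∀ m n, m ≤ n → n ≤ T → v m ≤ v n := by
    intro m n hmn hnT
    rw [hv m (le_trans hmn hnT), hv n hnT]
    have hsub : Finset.Icc (max n 1) T ⊆ Finset.Icc (max m 1) T :=
      Finset.Icc_subset_Icc (by omega) le_rfl
    have hle : (∑ s ∈ Finset.Icc (max n 1) T, η s) ≤ ∑ s ∈ Finset.Icc (max m 1) T, η s := by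
      apply Finset.sum_le_sum_of_subset_of_nonneg hsub
      intro i hi _
      rw [Finset.mem_Icc] at hi
      exact (hηpos' i (by omega) hi.2).le
    exact div_le_div_of_nonneg_left hηT.le (hS_pos (max n 1) (le_max_right _ _) (max_le hnT hT1)) hle
  have hsplitbot : ∀ n, 1 ≤ n → n ≤ T →
      (∑ t ∈ Finset.Icc n T, η t) = η n + ∑ t ∈ Finset.Icc (n + 1) T, η t := fun n h1 h2 =>
    CSMDaux.sum_Icc_succ_bot' h2 η
  have hkey : ∀ n, 1 ≤ n → n + 1 ≤ T →
      (v (n + 1) - v n) * (∑ t ∈ Finset.Icc (n + 1) T, η t) = v n * η n := by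
    intro n h1 h2
    have hSn1 : 0 < ∑ t ∈ Finset.Icc (n + 1) T, η t := hS_pos (n + 1) (by omega) h2
    have hSn : 0 < ∑ t ∈ Finset.Icc n T, η t := hS_pos n h1 (by omega)
    rw [hv (n + 1) h2, hv n (by omega), Nat.max_eq_left (by omega : 1 ≤ n + 1),
      Nat.max_eq_left h1]
    rw [div_sub_div _ _ hSn1.ne' hSn.ne', div_mul_eq_mul_div, div_mul_eq_mul_div]
    rw [div_eq_div_iff (by positivity) hSn.ne']
    rw [hsplitbot n h1 (by omega)]
    ring
  have hvT : v T = 1 := by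
    rw [hv T le_rfl, Nat.max_eq_left hT1, Finset.Icc_self, Finset.sum_singleton,
      div_self hηT.ne']
  have hv0S : v 0 * (∑ t ∈ Finset.Icc 1 T, η t) = η T := by
    rw [hv 0 (Nat.zero_le T)]
    have : max 0 1 = 1 := rfl
    rw [this, div_mul_cancel₀ _ (hS_pos 1 le_rfl hT1).ne']
  have hz0 : z 0 = xpt := by
    rw [hz 0 (Nat.zero_le T), Finset.Icc_eq_empty (by omega), Finset.sum_empty,
      div_self (hvpos 0 (Nat.zero_le T)).ne', one_smul, add_zero]
  have hzcombo : ∀ n, 1 ≤ n → n ≤ T →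
      z n = (v (n - 1) / v n) • z (n - 1) + ((v n - v (n - 1)) / v n) • x n := by
    intro n h1 hnT
    cases n with
    | zero => omega
    | succ m =>
      simp only [Nat.add_sub_cancel]
      have hvn : v (m + 1) ≠ 0 := (hvpos (m + 1) hnT).ne'
      have hvm : v m ≠ 0 := (hvpos m (by omega)).ne'
      have hW : ∀ k, k ≤ T → v k • z k
          = v 0 • xpt + ∑ s ∈ Finset.Icc 1 k, (v s - v (s - 1)) • x s := by
        intro k hk
        rw [hz k hk, smul_add, smul_smul, mul_div_cancel₀ _ (hvpos k hk).ne', Finset.smul_sum]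
        congr 1
        refine Finset.sum_congr rfl (fun s _ => ?_)
        rw [smul_smul, mul_div_cancel₀ _ (hvpos k hk).ne']
      have h2 : v (m + 1) • z (m + 1) = v m • z m + (v (m + 1) - v m) • x (m + 1) := by
        rw [hW (m + 1) hnT, hW m (by omega), CSMDaux.sum_Icc_succ_top' (by omega) _]
        simp only [Nat.add_sub_cancel]
        abel
      have h3 : z (m + 1) = (v (m + 1))⁻¹ • (v m • z m + (v (m + 1) - v m) • x (m + 1)) := by
        rw [← h2, inv_smul_smul₀ hvn]
      rw [h3, smul_add, smul_smul, smul_smul, inv_mul_eq_div, inv_mul_eq_div]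
  have hcoef : ∀ n, 1 ≤ n → n ≤ T →
      0 ≤ v (n - 1) / v n ∧ 0 ≤ (v n - v (n - 1)) / v n
        ∧ v (n - 1) / v n + (v n - v (n - 1)) / v n = 1 := by
    intro n h1 hnT
    have hvn : 0 < v n := hvpos n hnT
    have hvm : 0 < v (n - 1) := hvpos (n - 1) (by omega)
    have hmono : v (n - 1) ≤ v n := hvmono (n - 1) n (by omega) hnT
    refine ⟨by positivity, div_nonneg (by linarith) hvn.le, ?_⟩
    rw [← add_div, show v (n - 1) + (v n - v (n - 1)) = v n by ring, div_self hvn.ne']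
  have hzmem : ∀ n, n ≤ T → z n ∈ X := by
    intro n
    induction n with
    | zero => intro _; rw [hz0]; exact hxpt
    | succ m ih =>
      intro hm
      obtain ⟨hc1, hc2, hc3⟩ := hcoef (m + 1) (by omega) hm
      rw [hzcombo (m + 1) (by omega) hm]
      simp only [Nat.add_sub_cancel] at hc1 hc2 hc3 ⊢
      exact hXcv (ih (by omega)) (hxmem (m + 1) (by omega) (by omega)) hc1 hc2 hc3
  have hDnn : ∀ a ∈ X, ∀ b ∈ X, 0 ≤ breg ψ gψ a b := by
    intro a ha b hb
    refine le_trans ?_ (hψ_uc a ha b hb)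
    exact mul_nonneg (div_nonneg (by linarith) hp0.le) (Real.rpow_nonneg (hnrm_nonneg _) _)
  have hFz : ∀ n, n ≤ T → v n * (f (z n) + h (z n)) ≤ v 0 * (f xpt + h xpt)
      + ∑ r ∈ Finset.Icc 1 n, (v r - v (r - 1)) * (f (x r) + h (x r)) := by
    intro n
    induction n with
    | zero =>
      intro _
      rw [hz0, Finset.Icc_eq_empty (by omega), Finset.sum_empty, add_zero]
    | succ m ih =>
      intro hm
      obtain ⟨hc1, hc2, hc3⟩ := hcoef (m + 1) (by omega) hm
      simp only [Nat.add_sub_cancel] at hc1 hc2 hc3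
      have hrw := hzcombo (m + 1) (by omega) hm
      simp only [Nat.add_sub_cancel] at hrw
      have hf1 : f (z (m + 1)) ≤ (v m / v (m + 1)) * f (z m)
          + ((v (m + 1) - v m) / v (m + 1)) * f (x (m + 1)) := by
        rw [hrw]
        exact hf_cv.2 (Set.mem_univ _) (Set.mem_univ _) hc1 hc2 hc3
      have hh1 : h (z (m + 1)) ≤ (v m / v (m + 1)) * h (z m)
          + ((v (m + 1) - v m) / v (m + 1)) * h (x (m + 1)) := by
        rw [hrw]
        exact hh_cv.2 (Set.mem_univ _) (Set.mem_univ _) hc1 hc2 hc3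
      have hvn : 0 < v (m + 1) := hvpos (m + 1) hm
      have he1 : v (m + 1) * (v m / v (m + 1)) = v m := by
        field_simp
      have he2 : v (m + 1) * ((v (m + 1) - v m) / v (m + 1)) = v (m + 1) - v m := by
        field_simp
      have hcomb := mul_le_mul_of_nonneg_left (add_le_add hf1 hh1) hvn.le
      have hih := ih (by omega)
      rw [CSMDaux.sum_Icc_succ_top' (by omega : 1 ≤ m + 1) _]
      simp only [Nat.add_sub_cancel]
      have he1f : v (m + 1) * (v m / v (m + 1)) * (f (z m) + h (z m))
          = v m * (f (z m) + h (z m)) := by rw [he1]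
      have he2f : v (m + 1) * ((v (m + 1) - v m) / v (m + 1)) * (f (x (m + 1)) + h (x (m + 1)))
          = (v (m + 1) - v m) * (f (x (m + 1)) + h (x (m + 1))) := by rw [he2]
      linarith [hcomb, hih, he1f, he2f]
  have hstep : ∀ t, 1 ≤ t → t ≤ T → ∀ u ∈ X,
      η t * ((f (x (t + 1)) + h (x (t + 1))) - (f u + h u))
        ≤ η t * ⟪ghat t - gsub t, u - x t⟫
          + breg ψ gψ u (x t) - breg ψ gψ u (x (t + 1))
          + (η t ^ (p / (2 - p)) * (2 - p) * (2:ℝ) ^ ((3 * p - 4) / (2 - p)) * L ^ (p / (2 - p))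
            + η t ^ p * (4:ℝ) ^ (p - 1)
              * (M ^ p + dualNorm nrm (ghat t - gsub t) ^ p)) / p := by
    intro t h1 h2 u hu
    have hyX : x t ∈ X := hxmem t h1 (by omega)
    have hxpX : x (t + 1) ∈ X := hxmem (t + 1) (by omega) (by omega)
    have hgs := hgsub t (Finset.mem_Icc.mpr ⟨h1, h2⟩)
    have hmin := (hupdate t (Finset.mem_Icc.mpr ⟨h1, h2⟩)).2
    have hsm := hsmooth (x (t + 1)) hxpX (x t) hyX (gsub t) hgs
    exact CSMDaux.per_step hp1 hp2 hXcv hnrm_nonneg hnrm_zero hnrm_smul hnrm_tri hh_cv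
      hψ_diff hψ_uc hL hM hyX hxpX hgs hsm (hηpos' t h1 h2) hmin hu
  have hmain : ∀ n, 1 ≤ n → n ≤ T →
      η n * v n * (f (x (n + 1)) + h (x (n + 1)))
        + (∑ t ∈ Finset.Icc (n + 1) T, η t)
            * (∑ r ∈ Finset.Icc 1 n, (v r - v (r - 1)) * (f (x r) + h (x r)))
        - v 0 * (∑ t ∈ Finset.Icc 1 n, η t) * (f xpt + h xpt)
        + v (n - 1) * breg ψ gψ (z (n - 1)) (x (n + 1))
        + (v n - v (n - 1)) * breg ψ gψ (x n) (x (n + 1))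
      ≤ v 0 * breg ψ gψ xpt (x 1)
        + (∑ t ∈ Finset.Icc 1 n, η t * v (t - 1) * ⟪ghat t - gsub t, z (t - 1) - x t⟫)
        + ∑ t ∈ Finset.Icc 1 n, v t
            * ((η t ^ (p / (2 - p)) * (2 - p) * (2:ℝ) ^ ((3 * p - 4) / (2 - p))
                * L ^ (p / (2 - p))
              + η t ^ p * (4:ℝ) ^ (p - 1)
                * (M ^ p + dualNorm nrm (ghat t - gsub t) ^ p)) / p) := by
    intro n
    induction n with
    | zero => omega
    | succ m ih =>
      intro _ hmT
      rcases Nat.eq_zero_or_pos m with rfl | hm1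
      · -- base case n = 1
        simp only [Finset.Icc_self, Finset.sum_singleton, Nat.sub_self, Nat.add_sub_cancel,
          Nat.zero_add]
        rw [hz0]
        have hs := hstep 1 le_rfl hT1 xpt hxpt
        have hv10 : v 1 = v 0 := hv01.symm
        rw [hv10]
        have hsc := mul_le_mul_of_nonneg_left hs (hvpos 0 (Nat.zero_le T)).le
        linarith [hsc]
      · -- inductive step
        have hm1T : m ≤ T := by omega
        have hmT' : m + 1 ≤ T := hmT
        have ihm := ih hm1 hm1T
        simp only [Nat.add_sub_cancel]
        have hs1 := hstep (m + 1) (by omega) hmT' (z m) (hzmem m hm1T)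
        have hs2 := hstep (m + 1) (by omega) hmT' (x (m + 1))
          (hxmem (m + 1) (by omega) (by omega))
        simp only [sub_self, inner_zero_right, mul_zero, CSMDaux.breg_self, zero_add,
          zero_sub] at hs2
        obtain ⟨hc1, hc2, hc3⟩ := hcoef m hm1 hm1T
        have hcombo := CSMDaux.breg_combo hXcv hDnn (hzmem (m - 1) (by omega))
          (hxmem m hm1 (by omega)) (hxmem (m + 1) (by omega) (by omega)) hc1 hc2 hc3
        have hs3 : v m * breg ψ gψ (z m) (x (m + 1))
            ≤ v (m - 1) * breg ψ gψ (z (m - 1)) (x (m + 1))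
              + (v m - v (m - 1)) * breg ψ gψ (x m) (x (m + 1)) := by
          rw [← hzcombo m hm1 hm1T] at hcombo
          have h5 := mul_le_mul_of_nonneg_left hcombo (hvpos m hm1T).le
          have hvm : (0:ℝ) < v m := hvpos m hm1T
          have he1 : v m * (v (m - 1) / v m * breg ψ gψ (z (m - 1)) (x (m + 1)))
              = v (m - 1) * breg ψ gψ (z (m - 1)) (x (m + 1)) := by
            field_simp
          have he2 : v m * ((v m - v (m - 1)) / v m * breg ψ gψ (x m) (x (m + 1)))
              = (v m - v (m - 1)) * breg ψ gψ (x m) (x (m + 1)) := by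
            field_simp
          linarith [h5, he1, he2]
        have hs4 := hFz m hm1T
        have hs5 := hkey m hm1 hmT'
        have hs1' := mul_le_mul_of_nonneg_left hs1 (hvpos m hm1T).le
        have hs2' := mul_le_mul_of_nonneg_left hs2
          (by linarith [hvmono m (m + 1) (by omega) hmT'] : (0:ℝ) ≤ v (m + 1) - v m)
        have hs4' := mul_le_mul_of_nonneg_left hs4 (hηpos' (m + 1) (by omega) hmT').le
        have hs5' : (v (m + 1) - v m) * (∑ t ∈ Finset.Icc (m + 1) T, η t)
              * (f (x (m + 1)) + h (x (m + 1)))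
            = v m * η m * (f (x (m + 1)) + h (x (m + 1))) := by rw [hs5]
        have hsp1 : (∑ r ∈ Finset.Icc 1 (m + 1), (v r - v (r - 1)) * (f (x r) + h (x r)))
            = (∑ r ∈ Finset.Icc 1 m, (v r - v (r - 1)) * (f (x r) + h (x r)))
              + (v (m + 1) - v m) * (f (x (m + 1)) + h (x (m + 1))) := by
          rw [CSMDaux.sum_Icc_succ_top' (by omega) _]
          simp only [Nat.add_sub_cancel]
        have hsp2 : (∑ t ∈ Finset.Icc 1 (m + 1), η t)
            = (∑ t ∈ Finset.Icc 1 m, η t) + η (m + 1) :=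
          CSMDaux.sum_Icc_succ_top' (by omega) _
        have hsp3 : (∑ t ∈ Finset.Icc 1 (m + 1),
              η t * v (t - 1) * ⟪ghat t - gsub t, z (t - 1) - x t⟫)
            = (∑ t ∈ Finset.Icc 1 m, η t * v (t - 1) * ⟪ghat t - gsub t, z (t - 1) - x t⟫)
              + η (m + 1) * v m * ⟪ghat (m + 1) - gsub (m + 1), z m - x (m + 1)⟫ := by
          rw [CSMDaux.sum_Icc_succ_top' (by omega) _]
          simp only [Nat.add_sub_cancel]
        have hsp4 : (∑ t ∈ Finset.Icc 1 (m + 1), v t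
              * ((η t ^ (p / (2 - p)) * (2 - p) * (2:ℝ) ^ ((3 * p - 4) / (2 - p))
                  * L ^ (p / (2 - p))
                + η t ^ p * (4:ℝ) ^ (p - 1)
                  * (M ^ p + dualNorm nrm (ghat t - gsub t) ^ p)) / p))
            = (∑ t ∈ Finset.Icc 1 m, v t
              * ((η t ^ (p / (2 - p)) * (2 - p) * (2:ℝ) ^ ((3 * p - 4) / (2 - p))
                  * L ^ (p / (2 - p))
                + η t ^ p * (4:ℝ) ^ (p - 1)
                  * (M ^ p + dualNorm nrm (ghat t - gsub t) ^ p)) / p))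
              + v (m + 1)
                * ((η (m + 1) ^ (p / (2 - p)) * (2 - p) * (2:ℝ) ^ ((3 * p - 4) / (2 - p))
                  * L ^ (p / (2 - p))
                + η (m + 1) ^ p * (4:ℝ) ^ (p - 1)
                  * (M ^ p + dualNorm nrm (ghat (m + 1) - gsub (m + 1)) ^ p)) / p) :=
          CSMDaux.sum_Icc_succ_top' (by omega) _
        have hsp5 : (∑ t ∈ Finset.Icc (m + 1) T, η t)
            = η (m + 1) + ∑ t ∈ Finset.Icc (m + 2) T, η t := hsplitbot (m + 1) (by omega) hmT'
        rw [hsp5] at ihm hs5'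
        rw [hsp1, hsp2, hsp3, hsp4]
        linarith [ihm, hs1', hs2', hs3, hs4', hs5']
  have hfin := hmain T hT1 le_rfl
  have hempty : Finset.Icc (T + 1) T = ∅ := Finset.Icc_eq_empty (by omega)
  rw [hempty, Finset.sum_empty] at hfin
  have hd1 : 0 ≤ v (T - 1) * breg ψ gψ (z (T - 1)) (x (T + 1)) :=
    mul_nonneg (hvpos (T - 1) (by omega)).le
      (hDnn _ (hzmem (T - 1) (by omega)) _ (hxmem (T + 1) (by omega) le_rfl))
  have hd2 : 0 ≤ (v T - v (T - 1)) * breg ψ gψ (x T) (x (T + 1)) :=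
    mul_nonneg (by linarith [hvmono (T - 1) T (by omega) le_rfl])
      (hDnn _ (hxmem T hT1 (by omega)) _ (hxmem (T + 1) (by omega) le_rfl))
  have heq1 : v 0 * (∑ t ∈ Finset.Icc 1 T, η t) * (f xpt + h xpt)
      = η T * v T * (f xpt + h xpt) := by rw [hv0S, hvT]; ring
  have hCsum : (∑ t ∈ Finset.Icc 1 T,
        (η t ^ (p / (2 - p)) * v t * (2 - p) * (2:ℝ) ^ ((3 * p - 4) / (2 - p))
            * L ^ (p / (2 - p))
          + η t ^ p * v t * (4:ℝ) ^ (p - 1)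
            * (M ^ p + dualNorm nrm (ghat t - gsub t) ^ p)) / p)
      = ∑ t ∈ Finset.Icc 1 T, v t
          * ((η t ^ (p / (2 - p)) * (2 - p) * (2:ℝ) ^ ((3 * p - 4) / (2 - p))
              * L ^ (p / (2 - p))
            + η t ^ p * (4:ℝ) ^ (p - 1)
              * (M ^ p + dualNorm nrm (ghat t - gsub t) ^ p)) / p) :=
    Finset.sum_congr rfl (fun t _ => by ring)
  rw [hCsum]
  linarith [hfin, hd1, hd2, heq1]
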